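/- Let sequences {xᵏ} ⊂ ℝⁿ, {λ̄ᵏ} ⊂ [λ_min, λ_max]ᵐ, {r_k} ⊂ (0, ∞), {t_k} ⊂ (0, ∞), {ε_k} with ε_k ↓ 0, and {s_k} ⊂ (0, ∞) bounded be generated by Algorithm 2: t_{k+1} = √(‖h(xᵏ)‖² + s_k²); ‖∇f(x^{k+1}) + ∇h(x^{k+1})(λ̄ᵏ + (r_k/t_{k+1}) h(x^{k+1}))‖ ≤ ε_k; and r_{k+1} = r_k if ‖h(x^{k+1})‖ ≤ τ ‖h(xᵏ)‖, r_{k+1} = γ r_k otherwise, where 0 < τ < 1 and γ > 1. If {r_k} is unbounded, {h(xᵏ)} is bounded, and x̄ is a limit point of {xᵏ}, then ∇h(x̄) h(x̄) = 0, i.e. x̄ is a stationary point of the unconstrained problem of minimizing ‖h(x)‖². -/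
import Mathlib


open Filter

lemma grad_cont {E : Type*} [NormedAddCommGroup E] [InnerProductSpace ℝ E]
    [CompleteSpace E] {g : E → ℝ} (hg : ContDiff ℝ 2 g) :
    Continuous (gradient g) := by
  have h1 : Continuous (fderiv ℝ g) := hg.continuous_fderiv (by norm_num)
  exact ((InnerProductSpace.toDual ℝ E).symm.continuous.comp h1)

lemma key_ineq {E : Type*} [NormedAddCommGroup E] [NormedSpace ℝ E] {m : ℕ}
    (g0 : E) (g : Fin m → E) (lam hv : Fin m → ℝ) (c ε : ℝ) (hc : 0 < c)
    (hb : ‖g0 + ∑ i, (lam i + (1 / c) * hv i) • g i‖ ≤ ε) :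
    ‖∑ i, hv i • g i‖ ≤ c * (ε + ‖g0‖ + ∑ i, |lam i| * ‖g i‖) := by
  have hc' : c ≠ 0 := ne_of_gt hc
  have heq : ∑ i, hv i • g i
      = c • (g0 + ∑ i, (lam i + (1 / c) * hv i) • g i) - c • g0
        - ∑ i, (c * lam i) • g i := by
    rw [smul_add, Finset.smul_sum]
    have hterm : ∀ i : Fin m, c • ((lam i + (1 / c) * hv i) • g i)
        = (c * lam i) • g i + hv i • g i := by
      intro i
      rw [smul_smul, mul_add, ← mul_assoc, mul_one_div_cancel hc', one_mul, add_smul]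
    rw [Finset.sum_congr rfl (fun i _ => hterm i), Finset.sum_add_distrib]
    abel
  rw [heq]
  have h1 : ‖c • (g0 + ∑ i, (lam i + (1 / c) * hv i) • g i) - c • g0
      - ∑ i, (c * lam i) • g i‖
      ≤ ‖c • (g0 + ∑ i, (lam i + (1 / c) * hv i) • g i)‖ + ‖c • g0‖
        + ‖∑ i, (c * lam i) • g i‖ := by
    calc _ ≤ ‖c • (g0 + ∑ i, (lam i + (1 / c) * hv i) • g i) - c • g0‖
            + ‖∑ i, (c * lam i) • g i‖ := norm_sub_le _ _
      _ ≤ _ := by gcongr; exact norm_sub_le _ _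
  have h2 : ‖c • (g0 + ∑ i, (lam i + (1 / c) * hv i) • g i)‖ ≤ c * ε := by
    rw [norm_smul, Real.norm_eq_abs, abs_of_pos hc]
    exact mul_le_mul_of_nonneg_left hb hc.le
  have h3 : ‖c • g0‖ = c * ‖g0‖ := by
    rw [norm_smul, Real.norm_eq_abs, abs_of_pos hc]
  have h4 : ‖∑ i, (c * lam i) • g i‖ ≤ c * ∑ i, |lam i| * ‖g i‖ := by
    calc ‖∑ i, (c * lam i) • g i‖ ≤ ∑ i, ‖(c * lam i) • g i‖ :=
          norm_sum_le _ _
      _ = ∑ i, c * (|lam i| * ‖g i‖) := by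
          refine Finset.sum_congr rfl fun i _ => ?_
          rw [norm_smul, Real.norm_eq_abs, abs_mul, abs_of_pos hc, mul_assoc]
      _ = c * ∑ i, |lam i| * ‖g i‖ := by rw [Finset.mul_sum]
  calc _ ≤ ‖c • (g0 + ∑ i, (lam i + (1 / c) * hv i) • g i)‖ + ‖c • g0‖
        + ‖∑ i, (c * lam i) • g i‖ := h1
    _ ≤ c * ε + c * ‖g0‖ + c * ∑ i, |lam i| * ‖g i‖ := by
        rw [h3]; gcongr
    _ = c * (ε + ‖g0‖ + ∑ i, |lam i| * ‖g i‖) := by ring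


/-- Algorithm 2 (fixed smoothing parameter). If the penalty parameters `{r_k}`
are unbounded and `{h(xᵏ)}` is bounded, then every limit point `x̄` of `{xᵏ}` is a
stationary point of the unconstrained problem of minimizing `‖h(x)‖²`, i.e.
`∇h(x̄) h(x̄) = 0`. -/
theorem stmt15 {n m : ℕ} (f : EuclideanSpace ℝ (Fin n) → ℝ)
    (h : EuclideanSpace ℝ (Fin n) → EuclideanSpace ℝ (Fin m))
    (hf : ContDiff ℝ 2 f) (hh : ContDiff ℝ 2 h)
    (lammin lammax τ γ : ℝ) (hlm : lammin < lammax)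
    (hτ0 : 0 < τ) (hτ1 : τ < 1) (hγ : 1 < γ)
    (x : ℕ → EuclideanSpace ℝ (Fin n)) (lamb : ℕ → EuclideanSpace ℝ (Fin m))
    (rr t eps s : ℕ → ℝ)
    (hbox : ∀ k i, lammin ≤ lamb k i ∧ lamb k i ≤ lammax)
    (hrpos : ∀ k, 0 < rr k)
    (hepspos : ∀ k, 0 < eps k) (hepsanti : Antitone eps)
    (hepslim : Tendsto eps atTop (nhds 0))
    (hspos : ∀ k, 0 < s k) (hsbdd : ∃ S, ∀ k, s k ≤ S)
    (ht : ∀ k, t (k + 1) = Real.sqrt (‖h (x k)‖ ^ 2 + s k ^ 2))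
    (hstat : ∀ k, ‖gradient f (x (k + 1)) +
      ∑ i, (lamb k i + (rr k / t (k + 1)) * h (x (k + 1)) i) •
        gradient (fun y => h y i) (x (k + 1))‖ ≤ eps k)
    (hpen : ∀ k, rr (k + 1) =
      if ‖h (x (k + 1))‖ ≤ τ * ‖h (x k)‖ then rr k else γ * rr k)
    (hrunbdd : ¬ ∃ B, ∀ k, rr k ≤ B)
    (hhbdd : ∃ B, ∀ k, ‖h (x k)‖ ≤ B)
    (xbar : EuclideanSpace ℝ (Fin n)) (φ : ℕ → ℕ) (hφ : StrictMono φ)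
    (hlim : Tendsto (fun j => x (φ j)) atTop (nhds xbar)) :
    ∑ i, h xbar i • gradient (fun y => h y i) xbar = 0 := by
  obtain ⟨B, hB⟩ := hhbdd
  obtain ⟨S, hS⟩ := hsbdd
  -- coordinates of h are C²
  have hcoord : ∀ i : Fin m, ContDiff ℝ 2 (fun y => h y i) := fun i =>
    (EuclideanSpace.proj (𝕜 := ℝ) i).contDiff.comp hh
  -- rr is monotone
  have hrmono : Monotone rr := by
    apply monotone_nat_of_le_succ
    intro k
    rw [hpen k]
    split_ifs
    · exact le_rfl
    · nlinarith [hrpos k]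
  -- rr tends to infinity
  have hrtop : Tendsto rr atTop atTop := by
    apply tendsto_atTop_atTop_of_monotone' hrmono
    rintro ⟨M, hM⟩
    exact hrunbdd ⟨M, fun k => hM ⟨k, rfl⟩⟩
  -- t is bounded and positive
  set T : ℝ := Real.sqrt (B ^ 2 + S ^ 2) with hT
  have htpos : ∀ k, 0 < t (k + 1) := by
    intro k
    rw [ht k]
    have := hspos k
    positivity
  have htle : ∀ k, t (k + 1) ≤ T := by
    intro k
    rw [ht k, hT]
    apply Real.sqrt_le_sqrt
    have h1 : ‖h (x k)‖ ^ 2 ≤ B ^ 2 := by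
      have := hB k; nlinarith [norm_nonneg (h (x k))]
    have h2 : s k ^ 2 ≤ S ^ 2 := by
      have := hS k; have := hspos k; nlinarith
    linarith
  -- shifted subsequence indices
  set k : ℕ → ℕ := fun j => φ (j + 1) - 1 with hkdef
  have hk1 : ∀ j, k j + 1 = φ (j + 1) := by
    intro j
    have h5 : j + 1 ≤ φ (j + 1) := hφ.le_apply
    simp only [hkdef]
    omega
  have hkj : ∀ j, j ≤ k j := by
    intro j
    have h5 : j + 1 ≤ φ (j + 1) := hφ.le_apply
    simp only [hkdef]
    omega
  have hktop : Tendsto k atTop atTop := tendsto_atTop_mono hkj tendsto_id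
  -- the coefficient c j tends to zero
  set c : ℕ → ℝ := fun j => t (k j + 1) / rr (k j) with hcdef
  have hcpos : ∀ j, 0 < c j := fun j => div_pos (htpos _) (hrpos _)
  have hczero : Tendsto c atTop (nhds 0) := by
    apply squeeze_zero (fun j => (hcpos j).le)
      (g := fun j => T / rr (k j))
    · intro j
      simp only [hcdef]
      exact (div_le_div_iff_of_pos_right (hrpos (k j))).mpr (htle _)
    · exact Tendsto.div_atTop tendsto_const_nhds (hrtop.comp hktop)
  -- the map F and its continuity
  set F : EuclideanSpace ℝ (Fin n) → EuclideanSpace ℝ (Fin n) :=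
    fun y => ∑ i, h y i • gradient (fun z => h z i) y with hFdef
  have hFcont : Continuous F := by
    apply continuous_finset_sum
    intro i _
    exact (((EuclideanSpace.proj (𝕜 := ℝ) i).continuous.comp hh.continuous)).smul
      (grad_cont (hcoord i))
  -- bounding function D
  set L : ℝ := max |lammin| |lammax| with hLdef
  set D : EuclideanSpace ℝ (Fin n) → ℝ :=
    fun y => eps 0 + ‖gradient f y‖ + ∑ i, L * ‖gradient (fun z => h z i) y‖
    with hDdef
  have hDcont : Continuous D := by
    apply Continuous.add
    · exact continuous_const.add (grad_cont hf).norm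
    · exact continuous_finset_sum _ fun i _ =>
        continuous_const.mul (grad_cont (hcoord i)).norm
  -- per index bound
  have hbound : ∀ j, ‖F (x (φ (j + 1)))‖ ≤ c j * D (x (φ (j + 1))) := by
    intro j
    rw [← hk1 j]
    have hkey := key_ineq (gradient f (x (k j + 1)))
      (fun i => gradient (fun y => h y i) (x (k j + 1)))
      (fun i => lamb (k j) i) (fun i => h (x (k j + 1)) i)
      (c j) (eps (k j)) (hcpos j) ?_
    · refine hkey.trans ?_
      apply mul_le_mul_of_nonneg_left _ (hcpos j).le
      have heps : eps (k j) ≤ eps 0 := hepsanti (Nat.zero_le _)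
      have hsum : ∑ i, |lamb (k j) i| * ‖gradient (fun y => h y i) (x (k j + 1))‖
          ≤ ∑ i, L * ‖gradient (fun y => h y i) (x (k j + 1))‖ := by
        apply Finset.sum_le_sum
        intro i _
        apply mul_le_mul_of_nonneg_right _ (norm_nonneg _)
        exact abs_le_max_abs_abs (hbox (k j) i).1 (hbox (k j) i).2
      simp only [hDdef]
      linarith
    · have hc1 : 1 / c j = rr (k j) / t (k j + 1) := by
        rw [hcdef]; exact one_div_div _ _
      rw [hc1]
      exact hstat (k j)
  -- D along the subsequence converges
  have hlim1 : Tendsto (fun j => x (φ (j + 1))) atTop (nhds xbar) :=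
    hlim.comp (tendsto_add_atTop_nat 1)
  have hDlim : Tendsto (fun j => D (x (φ (j + 1)))) atTop (nhds (D xbar)) :=
    (hDcont.tendsto xbar).comp hlim1
  have hDev : ∀ᶠ j in atTop, D (x (φ (j + 1))) ≤ D xbar + 1 := by
    have := hDlim.eventually (eventually_le_nhds (lt_add_one (D xbar)))
    exact this
  -- F along the subsequence converges to 0
  have hFzero : Tendsto (fun j => F (x (φ (j + 1)))) atTop (nhds 0) := by
    apply squeeze_zero_norm' (a := fun j => c j * (D xbar + 1))
    · filter_upwards [hDev] with j hj
      refine (hbound j).trans ?_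
      exact mul_le_mul_of_nonneg_left hj (hcpos j).le
    · simpa using hczero.mul_const (D xbar + 1)
  have hFxbar : Tendsto (fun j => F (x (φ (j + 1)))) atTop (nhds (F xbar)) :=
    (hFcont.tendsto xbar).comp hlim1
  have : F xbar = 0 := tendsto_nhds_unique hFxbar hFzero
  exact this
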